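/- Let Γ be a graph on n vertices that is a disjoint union of cliques, with A the union of components having fewer than t vertices and B the union of components with at least t vertices. Then the maximum number of vertices of an induced subgraph of Γ containing no clique on t vertices equals (t-1)·c(B) + |V(A)|, where c(B) is the number of components of B. -/

import Mathlib

open SimpleGraph

/-- Every connected component of `G` is a complete graph. -/
def IsDisjointUnionOfCliques {V : Type*} (G : SimpleGraph V) : Prop :=
  ∀ u v : V, G.Reachable u v → u ≠ v → G.Adj u v

/-- The number of components of `Γ` having at least `t` vertices (the components of `B`). -/
noncomputable def numBigComponents {V : Type*} (Γ : SimpleGraph V) (t : ℕ) : ℕ :=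
  Nat.card {C : Γ.ConnectedComponent // t ≤ Nat.card C.supp}

/-- The number of vertices lying in components with fewer than `t` vertices (`|V(A)|`). -/
noncomputable def numSmallVertices {V : Type*} (Γ : SimpleGraph V) (t : ℕ) : ℕ :=
  Nat.card {v : V // Nat.card (Γ.connectedComponentMk v).supp < t}

/-- If `Γ` is a disjoint union of cliques, the largest `K_t`-free (induced) subgraph of `Γ`
has exactly `(t-1)·c(B) + |V(A)|` vertices. -/
theorem stmt_5 {V : Type*} [Fintype V] [DecidableEq V] {t : ℕ} (ht : 1 ≤ t)
    (Γ : SimpleGraph V) (hΓ : IsDisjointUnionOfCliques Γ) :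
    sSup {m | ∃ s : Finset V, s.card = m ∧ ∀ c ⊆ s, ¬ Γ.IsNClique t c}
      = (t - 1) * numBigComponents Γ t + numSmallVertices Γ t := by
  classical
  haveI : Fintype Γ.ConnectedComponent := Fintype.ofFinite _
  set fib : Γ.ConnectedComponent → Finset V :=
    fun C => Finset.univ.filter (fun v => Γ.connectedComponentMk v = C) with hfib
  have hsupp : ∀ C : Γ.ConnectedComponent, Nat.card C.supp = (fib C).card := by
    intro C
    rw [Nat.card_eq_fintype_card, ← Set.toFinset_card]
    congr 1
    ext v
    simp [hfib, ConnectedComponent.mem_supp_iff]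
  -- key equivalence
  have key : ∀ s : Finset V, (∀ c ⊆ s, ¬ Γ.IsNClique t c) ↔
      ∀ C : Γ.ConnectedComponent,
        (s.filter (fun v => Γ.connectedComponentMk v = C)).card ≤ t - 1 := by
    intro s
    constructor
    · intro hs C
      by_contra hC
      push_neg at hC
      have htle : t ≤ (s.filter (fun v => Γ.connectedComponentMk v = C)).card :=
        Nat.le_of_pred_lt hC
      obtain ⟨c, hcsub, hccard⟩ := Finset.exists_subset_card_eq htle
      refine hs c (hcsub.trans (Finset.filter_subset _ _)) ⟨?_, hccard⟩
      intro u hu v hv huv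
      have hu' := (Finset.mem_filter.1 (hcsub hu)).2
      have hv' := (Finset.mem_filter.1 (hcsub hv)).2
      exact hΓ u v (ConnectedComponent.exact (hu'.trans hv'.symm)) huv
    · intro hs c hcsub hc
      obtain ⟨v0, hv0⟩ : ∃ v0, v0 ∈ c :=
        Finset.card_pos.1 (by rw [hc.card_eq]; exact ht)
      have hcomp : ∀ v ∈ c, Γ.connectedComponentMk v = Γ.connectedComponentMk v0 := by
        intro v hv
        rcases eq_or_ne v v0 with rfl | hne
        · rfl
        · exact ConnectedComponent.sound (hc.isClique hv hv0 hne).reachable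
      have : c ⊆ s.filter (fun v => Γ.connectedComponentMk v = Γ.connectedComponentMk v0) :=
        fun v hv => Finset.mem_filter.2 ⟨hcsub hv, hcomp v hv⟩
      have hle := (Finset.card_le_card this).trans (hs _)
      rw [hc.card_eq] at hle
      omega
  set M : ℕ := ∑ C : Γ.ConnectedComponent, min ((fib C).card) (t - 1) with hM
  -- M is achieved
  have hchoice : ∀ C : Γ.ConnectedComponent,
      ∃ u ⊆ fib C, u.card = min ((fib C).card) (t - 1) :=
    fun C => Finset.exists_subset_card_eq (min_le_left _ _)
  choose f hf1 hf2 using hchoice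
  have hfibmem : ∀ C, ∀ v ∈ f C, Γ.connectedComponentMk v = C := by
    intro C v hv
    have := hf1 C hv
    simp only [hfib, Finset.mem_filter] at this
    exact this.2
  have hdisj : ∀ C ∈ (Finset.univ : Finset Γ.ConnectedComponent), ∀ D ∈ Finset.univ,
      C ≠ D → Disjoint (f C) (f D) := by
    intro C _ D _ hCD
    refine Finset.disjoint_left.2 fun v hvC hvD => hCD ?_
    rw [← hfibmem C v hvC, hfibmem D v hvD]
  set s0 : Finset V := Finset.univ.biUnion f with hs0
  have hs0card : s0.card = M := by
    rw [hs0, Finset.card_biUnion hdisj, hM]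
    exact Finset.sum_congr rfl fun C _ => hf2 C
  have hs0free : ∀ c ⊆ s0, ¬ Γ.IsNClique t c := by
    rw [key]
    intro C
    have hsub : s0.filter (fun v => Γ.connectedComponentMk v = C) ⊆ f C := by
      intro v hv
      obtain ⟨hvs, hvC⟩ := Finset.mem_filter.1 hv
      obtain ⟨D, _, hvD⟩ := Finset.mem_biUnion.1 hvs
      rwa [← hvC, hfibmem D v hvD]
    exact (Finset.card_le_card hsub).trans ((hf2 C).trans_le (min_le_right _ _))
  -- every member is ≤ M
  have hub : ∀ m ∈ {m | ∃ s : Finset V, s.card = m ∧ ∀ c ⊆ s, ¬ Γ.IsNClique t c}, m ≤ M := by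
    rintro m ⟨s, rfl, hs⟩
    rw [Finset.card_eq_sum_card_fiberwise
      (f := fun v => Γ.connectedComponentMk v) (fun v _ => Finset.mem_univ _), hM]
    refine Finset.sum_le_sum fun C _ => le_min ?_ ((key s).1 hs C)
    exact Finset.card_le_card (fun v hv =>
      Finset.mem_filter.2 ⟨Finset.mem_univ v, (Finset.mem_filter.1 hv).2⟩)
  -- compute sSup
  have hsup : sSup {m | ∃ s : Finset V, s.card = m ∧ ∀ c ⊆ s, ¬ Γ.IsNClique t c} = M := by
    apply le_antisymm
    · exact csSup_le ⟨M, s0, hs0card, hs0free⟩ hub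
    · exact le_csSup ⟨M, hub⟩ ⟨s0, hs0card, hs0free⟩
  rw [hsup]
  -- now compute M
  set big : Finset Γ.ConnectedComponent :=
    Finset.univ.filter (fun C => t ≤ Nat.card C.supp) with hbig
  have hB : numBigComponents Γ t = big.card := by
    rw [numBigComponents, Nat.card_eq_fintype_card, Fintype.card_subtype, hbig]
  have hA : numSmallVertices Γ t
      = ∑ C ∈ Finset.univ.filter (fun C => ¬ t ≤ Nat.card C.supp), (fib C).card := by
    rw [numSmallVertices, Nat.card_eq_fintype_card, Fintype.card_subtype]
    rw [Finset.card_eq_sum_card_fiberwise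
      (f := fun v => Γ.connectedComponentMk v)
      (t := Finset.univ.filter (fun C => ¬ t ≤ Nat.card C.supp)) ?_]
    · refine Finset.sum_congr rfl fun C hC => ?_
      congr 1
      ext v
      simp only [hfib, Finset.mem_filter, Finset.mem_univ, true_and]
      constructor
      · rintro ⟨_, h⟩; exact h
      · rintro h
        refine ⟨?_, h⟩
        rw [h]
        have := (Finset.mem_filter.1 hC).2
        omega
    · intro v hv
      simp only [Finset.mem_coe, Finset.mem_filter, Finset.mem_univ, true_and] at hv ⊢
      omega
  rw [hB, hA, hM,
    ← Finset.sum_filter_add_sum_filter_not Finset.univ (fun C => t ≤ Nat.card C.supp)]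
  congr 1
  · have h1 : ∀ C ∈ Finset.univ.filter (fun C => t ≤ Nat.card C.supp),
        min ((fib C).card) (t - 1) = t - 1 := by
      intro C hC
      have hC' := (Finset.mem_filter.1 hC).2
      rw [hsupp] at hC'
      omega
    rw [Finset.sum_congr rfl h1, Finset.sum_const, smul_eq_mul, mul_comm]
  · refine Finset.sum_congr rfl fun C hC => ?_
    have hC' := (Finset.mem_filter.1 hC).2
    rw [hsupp] at hC'
    omega
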